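/- For every t ≥ 0 and every s ≥ 1, ω(d_{t·2^s}) = ω(d_t); equivalently, δ_{t·2^s} = δ_t where δ_m = log_2(ω(d_m)), so the sequence (δ_m) is a fractal sequence containing itself as the subsequence of terms of even index. -/
import Mathlib


/-- `Z a b = a*b / gcd(a,b)^2`. -/
def Zfun (a b : ℕ) : ℕ := a * b / Nat.gcd a b ^ 2

/-- The array: `ent 0 n` is the `n`-th prime (0-indexed), and
`ent (m+1) n = Z (ent m n) (ent m (n+1))`. -/
noncomputable def ent : ℕ → ℕ → ℕ
  | 0, n => Nat.nth Nat.Prime n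
  | m + 1, n => Zfun (ent m n) (ent m (n + 1))

/-- The left edge `d_m`. -/
noncomputable def dseq (m : ℕ) : ℕ := ent m 0

open Finset symmDiff

lemma squarefree_prod_primes {s : Finset ℕ} (hs : ∀ p ∈ s, p.Prime) :
    Squarefree (∏ p ∈ s, p) := by
  classical
  induction s using Finset.induction with
  | empty => simpa using squarefree_one
  | @insert a s' ha ih =>
    rw [Finset.prod_insert ha]
    refine (Nat.squarefree_mul_iff).mpr ⟨?_, (hs a (mem_insert_self a s')).squarefree,
      ih fun p hp => hs p (mem_insert_of_mem hp)⟩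
    refine Nat.Coprime.prod_right fun p hp => ?_
    exact (Nat.coprime_primes (hs a (mem_insert_self a s'))
      (hs p (mem_insert_of_mem hp))).mpr (by rintro rfl; exact ha hp)

lemma prod_primes_pos {s : Finset ℕ} (hs : ∀ p ∈ s, p.Prime) :
    0 < ∏ p ∈ s, p :=
  Finset.prod_pos fun p hp => (hs p hp).pos

/-- Zfun on products of distinct primes is the symmetric difference. -/
lemma Zfun_prod {q : ℕ → ℕ} (hq : ∀ i, (q i).Prime) (hinj : Function.Injective q)
    (A B : Finset ℕ) :
    Zfun (∏ i ∈ A, q i) (∏ i ∈ B, q i) = ∏ i ∈ A ∆ B, q i := by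
  classical
  have hAimg : (∏ i ∈ A, q i) = ∏ p ∈ A.image q, p := (Finset.prod_image
    (f := fun p => p) (g := q) (fun x _ y _ h => hinj h)).symm
  have hBimg : (∏ i ∈ B, q i) = ∏ p ∈ B.image q, p := (Finset.prod_image
    (f := fun p => p) (g := q) (fun x _ y _ h => hinj h)).symm
  have hAprime : ∀ p ∈ A.image q, p.Prime := by
    intro p hp; obtain ⟨i, _, rfl⟩ := mem_image.mp hp; exact hq i
  have hBprime : ∀ p ∈ B.image q, p.Prime := by
    intro p hp; obtain ⟨i, _, rfl⟩ := mem_image.mp hp; exact hq i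
  have hA0 : (∏ i ∈ A, q i) ≠ 0 := by rw [hAimg]; exact (prod_primes_pos hAprime).ne'
  have hB0 : (∏ i ∈ B, q i) ≠ 0 := by rw [hBimg]; exact (prod_primes_pos hBprime).ne'
  have hAsf : Squarefree (∏ i ∈ A, q i) := by rw [hAimg]; exact squarefree_prod_primes hAprime
  -- gcd is the product over the intersection
  have hgcd : Nat.gcd (∏ i ∈ A, q i) (∏ i ∈ B, q i) = ∏ i ∈ A ∩ B, q i := by
    have hsf : Squarefree (Nat.gcd (∏ i ∈ A, q i) (∏ i ∈ B, q i)) :=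
      hAsf.squarefree_of_dvd (Nat.gcd_dvd_left _ _)
    have hpf : (Nat.gcd (∏ i ∈ A, q i) (∏ i ∈ B, q i)).primeFactors
        = (A ∩ B).image q := by
      rw [Nat.primeFactors_gcd hA0 hB0, hAimg, hBimg,
        Nat.primeFactors_prod hAprime, Nat.primeFactors_prod hBprime,
        Finset.image_inter _ _ hinj]
    calc Nat.gcd (∏ i ∈ A, q i) (∏ i ∈ B, q i)
        = ∏ p ∈ (Nat.gcd (∏ i ∈ A, q i) (∏ i ∈ B, q i)).primeFactors, p :=
          (Nat.prod_primeFactors_of_squarefree hsf).symm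
      _ = ∏ p ∈ (A ∩ B).image q, p := by rw [hpf]
      _ = ∏ i ∈ A ∩ B, q i := Finset.prod_image (fun x _ y _ h => hinj h)
  -- a * b = (∏ over A∆B) * (∏ over A∩B)^2
  have hmul : (∏ i ∈ A, q i) * (∏ i ∈ B, q i)
      = (∏ i ∈ A ∆ B, q i) * (∏ i ∈ A ∩ B, q i) ^ 2 := by
    have h1 : A = (A \ B) ∪ (A ∩ B) := by
      ext x; simp [mem_union, mem_sdiff, mem_inter]; tauto
    have h2 : B = (B \ A) ∪ (A ∩ B) := by
      ext x; simp [mem_union, mem_sdiff, mem_inter]; tauto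
    have hd1 : Disjoint (A \ B) (A ∩ B) := by
      simp [Finset.disjoint_left, mem_sdiff, mem_inter]; tauto
    have hd2 : Disjoint (B \ A) (A ∩ B) := by
      simp [Finset.disjoint_left, mem_sdiff, mem_inter]; tauto
    have hd3 : Disjoint (A \ B) (B \ A) := by
      simp [Finset.disjoint_left, mem_sdiff]; tauto
    have hsd : A ∆ B = (A \ B) ∪ (B \ A) := rfl
    calc (∏ i ∈ A, q i) * (∏ i ∈ B, q i)
        = ((∏ i ∈ A \ B, q i) * ∏ i ∈ A ∩ B, q i)
          * ((∏ i ∈ B \ A, q i) * ∏ i ∈ A ∩ B, q i) := by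
          rw [← Finset.prod_union hd1, ← Finset.prod_union hd2, ← h1, ← h2]
      _ = ((∏ i ∈ A \ B, q i) * ∏ i ∈ B \ A, q i) * (∏ i ∈ A ∩ B, q i) ^ 2 := by ring
      _ = (∏ i ∈ A ∆ B, q i) * (∏ i ∈ A ∩ B, q i) ^ 2 := by
          rw [hsd, Finset.prod_union hd3]
  have hpos : 0 < (∏ i ∈ A ∩ B, q i) ^ 2 :=
    pow_pos (Finset.prod_pos fun i _ => (hq i).pos) 2
  rw [Zfun, hgcd, hmul, Nat.mul_div_cancel _ hpos]

/-- The index sets. -/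
noncomputable def Kset : ℕ → Finset ℕ
  | 0 => {0}
  | m + 1 => Kset m ∆ (Kset m).image (· + 1)

lemma nth_prime_inj : Function.Injective (Nat.nth Nat.Prime) :=
  (Nat.nth_injective Nat.infinite_setOf_prime)

/-- `ent m n` is the product of primes indexed by `n + k`, `k ∈ Kset m`. -/
lemma ent_eq_prod (m : ℕ) : ∀ n, ent m n = ∏ k ∈ Kset m, Nat.nth Nat.Prime (n + k) := by
  induction m with
  | zero => intro n; simp [ent, Kset]
  | succ m ih =>
    intro n
    classical
    have hq : ∀ i, (Nat.nth Nat.Prime (n + i)).Prime := fun i => Nat.prime_nth_prime _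
    have hinj : Function.Injective (fun i => Nat.nth Nat.Prime (n + i)) :=
      fun x y h => by simpa using nth_prime_inj h
    have h2 : ent m (n + 1) = ∏ k ∈ (Kset m).image (· + 1), Nat.nth Nat.Prime (n + k) := by
      rw [Finset.prod_image (fun x _ y _ h => by omega), ih (n + 1)]
      apply Finset.prod_congr rfl
      intro k _; ring_nf
    show Zfun (ent m n) (ent m (n + 1)) = _
    rw [ih n, h2, Zfun_prod hq hinj, Kset]

lemma card_primeFactors_ent (m n : ℕ) :
    (ent m n).primeFactors.card = (Kset m).card := by
  classical
  have hq : ∀ i, (Nat.nth Nat.Prime (n + i)).Prime := fun i => Nat.prime_nth_prime _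
  have hinj : ∀ x ∈ Kset m, ∀ y ∈ Kset m,
      Nat.nth Nat.Prime (n + x) = Nat.nth Nat.Prime (n + y) → x = y :=
    fun x _ y _ h => by have := nth_prime_inj h; omega
  have himg : (∏ k ∈ Kset m, Nat.nth Nat.Prime (n + k))
      = ∏ p ∈ (Kset m).image (fun i => Nat.nth Nat.Prime (n + i)), p :=
    (Finset.prod_image (f := fun p => p) (g := fun i => Nat.nth Nat.Prime (n + i)) hinj).symm
  rw [ent_eq_prod m n, himg,
    Nat.primeFactors_prod (by intro p hp; obtain ⟨i, _, rfl⟩ := mem_image.mp hp; exact hq i)]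
  exact Finset.card_image_of_injOn hinj

/-- stepping by 2. -/
lemma Kset_add_two (m : ℕ) : Kset (m + 2) = Kset m ∆ (Kset m).image (· + 2) := by
  classical
  have himg : Function.Injective (fun x : ℕ => x + 1) := fun x y h => Nat.add_right_cancel h
  have hfe : ((fun x : ℕ => x + 1) ∘ (fun x : ℕ => x + 1)) = (fun x : ℕ => x + 2) := by
    funext x; show x + 1 + 1 = x + 2; omega
  show (Kset m ∆ (Kset m).image (· + 1))
      ∆ ((Kset m ∆ (Kset m).image (· + 1)).image (· + 1)) = _
  rw [Finset.image_symmDiff _ _ himg, Finset.image_image, hfe,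
    symmDiff_assoc, symmDiff_symmDiff_cancel_left]

/-- doubling. -/
lemma Kset_two_mul (m : ℕ) : Kset (2 * m) = (Kset m).image (· * 2) := by
  classical
  induction m with
  | zero => simp [Kset]
  | succ m ih =>
    have h : 2 * (m + 1) = 2 * m + 2 := by ring
    have hinj2 : Function.Injective (fun x : ℕ => x * 2) := fun x y h =>
      Nat.eq_of_mul_eq_mul_right (by norm_num) h
    have hfe : ((fun x : ℕ => x + 2) ∘ (fun x : ℕ => x * 2))
        = ((fun x : ℕ => x * 2) ∘ (fun x : ℕ => x + 1)) := by
      funext x; show x * 2 + 2 = (x + 1) * 2; omega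
    rw [h, Kset_add_two, ih, show Kset (m + 1) = Kset m ∆ (Kset m).image (· + 1) from rfl,
      Finset.image_symmDiff _ _ hinj2, Finset.image_image, Finset.image_image, hfe]

theorem omega_d_fractal (t s : ℕ) (hs : 1 ≤ s) :
    (dseq (t * 2 ^ s)).primeFactors.card = (dseq t).primeFactors.card := by
  have key : ∀ s t : ℕ, (Kset (t * 2 ^ s)).card = (Kset t).card := by
    intro s
    induction s with
    | zero => intro t; simp
    | succ s ih =>
      intro t
      have h : t * 2 ^ (s + 1) = 2 * (t * 2 ^ s) := by ring
      rw [h, Kset_two_mul, Finset.card_image_of_injective _ (fun x y h => by omega), ih]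
  rw [dseq, dseq, card_primeFactors_ent, card_primeFactors_ent, key]
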